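/- For all x_i, y_i ∈ K_i (1 ≤ i ≤ N) and all m ≤ 0, the expected distance between the two orbit endpoints satisfies ∫ d(Y^{x}_{m0}, Y^{y}_{m0}) dP^m_{x_1...x_N} ≤ a^{-m+1} (1/N) Σ_{i=1}^N d(x_i, y_i), where Y^{x}_{m0}(σ) = w_{σ_0}∘⋯∘w_{σ_m}(x_{i(σ_m)}). -/

import Mathlib

open MeasureTheory ENNReal Filter

/-- A contractive Markov system on a metric space `K` with vertex type `V` and edge type `E`. -/
structure CMS (E V K : Type*) [Fintype E] [MetricSpace K] [MeasurableSpace K] where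
  i : E → V
  t : E → V
  Ks : V → Set K
  w : E → K → K
  p : E → K → ℝ
  a : ℝ
  ha0 : 0 < a
  ha1 : a < 1
  Ks_nonempty : ∀ v, (Ks v).Nonempty
  Ks_meas : ∀ v, MeasurableSet (Ks v)
  Ks_disj : ∀ v v', v ≠ v' → Disjoint (Ks v) (Ks v')
  Ks_cover : ∀ x : K, ∃ v, x ∈ Ks v
  w_meas : ∀ e, Measurable (w e)
  p_meas : ∀ e, Measurable (p e)
  p_nonneg : ∀ e x, 0 ≤ p e x
  p_sum : ∀ x : K, ∑ e, p e x = 1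
  p_zero : ∀ e, ∀ x ∉ Ks (i e), p e x = 0
  w_maps : ∀ e, Set.MapsTo (w e) (Ks (i e)) (Ks (t e))
  contractive : ∀ v, ∀ x ∈ Ks v, ∀ y ∈ Ks v,
      ∑ e, p e x * dist (w e x) (w e y) ≤ a * dist x y

variable {E V K : Type*} [Fintype E] [MetricSpace K] [MeasurableSpace K]

/-- `S.orbit e m x j = w_{e_{m+j}} ∘ ⋯ ∘ w_{e_m} (x)`. -/
def CMS.orbit (S : CMS E V K) (e : ℤ → E) (m : ℤ) (x : K) : ℕ → K
  | 0 => S.w (e m) x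
  | j + 1 => S.w (e (m + j + 1)) (S.orbit e m x j)

/-- `S.pathProb e m x j = p_{e_m}(x) p_{e_{m+1}}(w_{e_m}x) ⋯ p_{e_{m+j}}(w_{e_{m+j-1}}∘⋯∘w_{e_m}x)`. -/
def CMS.pathProb (S : CMS E V K) (e : ℤ → E) (m : ℤ) (x : K) : ℕ → ℝ
  | 0 => S.p (e m) x
  | j + 1 => S.pathProb e m x j * S.p (e (m + j + 1)) (S.orbit e m x j)

/-- The σ-algebra `𝒜_m` on `Σ = E^ℤ` generated by the coordinates with index `≥ m`. -/
def Am (E : Type*) (m : ℤ) : MeasurableSpace (ℤ → E) :=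
  ⨆ (i : ℤ) (_ : m ≤ i), MeasurableSpace.comap (fun σ => σ i) ⊤

/-- The cylinder `_m[e_m, …, e_{m+j}]`. -/
def cyl (m : ℤ) (j : ℕ) (e : ℤ → E) : Set (ℤ → E) :=
  {σ | ∀ k : ℤ, m ≤ k → k ≤ m + j → σ k = e k}

/-- `P` is the family of Markov measures `P^m_x` on `(Σ, 𝒜_m)` of the CMS `S`. -/
def IsKernel (S : CMS E V K) (P : ∀ m : ℤ, K → @Measure (ℤ → E) (Am E m)) : Prop :=
  (∀ (m : ℤ) (x : K), @IsProbabilityMeasure _ (Am E m) (P m x)) ∧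
  ∀ (m : ℤ) (x : K) (e : ℤ → E) (j : ℕ),
    P m x (cyl m j e) = ENNReal.ofReal (S.pathProb e m x j)

/-- The `m`-th lift `Φ_m(ν)(A) = ∫ P^m_x(A) dν(x)`. -/
noncomputable def liftMeas (P : ∀ m : ℤ, K → @Measure (ℤ → E) (Am E m))
    (m : ℤ) (ν : Measure K) (A : Set (ℤ → E)) : ℝ≥0∞ :=
  ∫⁻ x, P m x A ∂ν

/-- The lift outer measure `Φ(ν)`, via coverings `B ⊆ ⋃_{m ≤ 0} A_m`, `A_m ∈ 𝒜_m` (indexed by `m = -n`). -/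
noncomputable def PhiM (P : ∀ m : ℤ, K → @Measure (ℤ → E) (Am E m))
    (ν : Measure K) (B : Set (ℤ → E)) : ℝ≥0∞ :=
  ⨅ (A : ℕ → Set (ℤ → E)) (_ : ∀ n : ℕ, MeasurableSet[Am E (-(n : ℤ))] (A n))
    (_ : B ⊆ ⋃ n, A n), ∑' n : ℕ, liftMeas P (-(n : ℤ)) ν (A n)

/-- `Y^{x_1…x_N}_{m0}(σ) = w_{σ_0}∘⋯∘w_{σ_m}(x_{i(σ_m)})`. -/
noncomputable def CMS.Y (S : CMS E V K) (xs : V → K) (m : ℤ) (σ : ℤ → E) : K :=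
  S.orbit σ m (xs (S.i (σ m))) (-m).toNat

/-- The uniform measure `(1/N) ∑_i δ_{x_i}`. -/
noncomputable def unif [Fintype V] (xs : V → K) : Measure K :=
  ((Fintype.card V : ℝ≥0∞))⁻¹ • ∑ v : V, Measure.dirac (xs v)

/-- The measure `P^m_{x_1…x_N} = Φ_m((1/N)∑δ_{x_i}) = (1/N)∑_i P^m_{x_i}`. -/
noncomputable def PmMix [Fintype V] (P : ∀ m : ℤ, K → @Measure (ℤ → E) (Am E m))
    (xs : V → K) (m : ℤ) : @Measure (ℤ → E) (Am E m) :=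
  ((Fintype.card V : ℝ≥0∞))⁻¹ • ∑ v : V, P m (xs v)

namespace CMS

lemma tail_snoc' {n : ℕ} {β : Type*} (c : Fin (n + 1) → β) (e : β) :
    Fin.tail (α := fun _ => β) (Fin.snoc (α := fun _ => β) c e)
      = Fin.snoc (α := fun _ => β) (Fin.tail (α := fun _ => β) c) e := by
  funext i
  induction i using Fin.lastCases with
  | last =>
      show (Fin.snoc (α := fun _ => β) c e) (Fin.last n).succ = _
      rw [Fin.succ_last]
      rw [Fin.snoc_last, Fin.snoc_last]
  | cast i =>
      show (Fin.snoc (α := fun _ => β) c e) i.castSucc.succ = _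
      rw [Fin.succ_castSucc]
      rw [Fin.snoc_castSucc, Fin.snoc_castSucc]
      rfl

variable {E V K : Type*} [Fintype E] [MetricSpace K] [MeasurableSpace K]

/-- `orbT c x = w_{c n} ∘ ⋯ ∘ w_{c 0} (x)`. -/
def orbT (S : CMS E V K) : (n : ℕ) → (Fin (n + 1) → E) → K → K
  | 0, c, x => S.w (c 0) x
  | n + 1, c, x => S.orbT n (Fin.tail c) (S.w (c 0) x)

def probT (S : CMS E V K) : (n : ℕ) → (Fin (n + 1) → E) → K → ℝ
  | 0, c, x => S.p (c 0) x
  | n + 1, c, x => S.p (c 0) x * S.probT n (Fin.tail c) (S.w (c 0) x)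

lemma orbT_zero (S : CMS E V K) (c : Fin 1 → E) (x : K) : S.orbT 0 c x = S.w (c 0) x := rfl

lemma orbT_succ (S : CMS E V K) (n : ℕ) (c : Fin (n + 2) → E) (x : K) :
    S.orbT (n + 1) c x = S.orbT n (Fin.tail c) (S.w (c 0) x) := rfl

lemma probT_zero (S : CMS E V K) (c : Fin 1 → E) (x : K) : S.probT 0 c x = S.p (c 0) x := rfl

lemma probT_succ (S : CMS E V K) (n : ℕ) (c : Fin (n + 2) → E) (x : K) :
    S.probT (n + 1) c x = S.p (c 0) x * S.probT n (Fin.tail c) (S.w (c 0) x) := rfl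

lemma snoc_zero' {n : ℕ} {β : Type*} (c : Fin (n + 1) → β) (e : β) :
    Fin.snoc (α := fun _ => β) c e 0 = c 0 := by
  rw [← Fin.castSucc_zero, Fin.snoc_castSucc]

lemma orbT_snoc (S : CMS E V K) (n : ℕ) (c : Fin (n + 1) → E) (e : E) (x : K) :
    S.orbT (n + 1) (Fin.snoc c e) x = S.w e (S.orbT n c x) := by
  induction n generalizing x with
  | zero =>
      rw [orbT_succ, tail_snoc', snoc_zero', orbT_zero, orbT_zero]
      congr 1
  | succ k ih =>
      rw [orbT_succ, tail_snoc', snoc_zero', ih, orbT_succ]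

lemma probT_snoc (S : CMS E V K) (n : ℕ) (c : Fin (n + 1) → E) (e : E) (x : K) :
    S.probT (n + 1) (Fin.snoc c e) x = S.probT n c x * S.p e (S.orbT n c x) := by
  induction n generalizing x with
  | zero =>
      rw [probT_succ, tail_snoc', snoc_zero', probT_zero, probT_zero, orbT_zero]
      congr 2
  | succ k ih =>
      rw [probT_succ, tail_snoc', snoc_zero', ih, probT_succ, orbT_succ]
      ring

lemma orbT_cons (S : CMS E V K) (n : ℕ) (c : Fin (n + 1) → E) (e : E) (x : K) :
    S.orbT (n + 1) (Fin.cons e c) x = S.orbT n c (S.w e x) := by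
  rw [orbT_succ, Fin.tail_cons, Fin.cons_zero]

lemma probT_cons (S : CMS E V K) (n : ℕ) (c : Fin (n + 1) → E) (e : E) (x : K) :
    S.probT (n + 1) (Fin.cons e c) x = S.p e x * S.probT n c (S.w e x) := by
  rw [probT_succ, Fin.tail_cons, Fin.cons_zero]

lemma orbit_eq_orbT (S : CMS E V K) (e : ℤ → E) (m : ℤ) (x : K) (j : ℕ) :
    S.orbit e m x j = S.orbT j (fun k : Fin (j + 1) => e (m + (k : ℕ))) x := by
  induction j with
  | zero =>
      show S.w (e m) x = S.w (e (m + ((0 : Fin 1) : ℕ))) x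
      norm_num
  | succ k ih =>
      have hsnoc : (fun kk : Fin (k + 2) => e (m + (kk : ℕ)))
          = Fin.snoc (fun kk : Fin (k + 1) => e (m + (kk : ℕ))) (e (m + (k + 1))) := by
        funext kk
        refine Fin.lastCases ?_ (fun kk => ?_) kk
        · rw [Fin.snoc_last]
          norm_num
        · rw [Fin.snoc_castSucc]
          simp
      rw [hsnoc, orbT_snoc, ← ih]
      show S.w (e (m + k + 1)) (S.orbit e m x k) = _
      congr 2
      omega

lemma pathProb_eq_probT (S : CMS E V K) (e : ℤ → E) (m : ℤ) (x : K) (j : ℕ) :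
    S.pathProb e m x j = S.probT j (fun k : Fin (j + 1) => e (m + (k : ℕ))) x := by
  induction j with
  | zero =>
      show S.p (e m) x = S.p (e (m + ((0 : Fin 1) : ℕ))) x
      norm_num
  | succ k ih =>
      have hsnoc : (fun kk : Fin (k + 2) => e (m + (kk : ℕ)))
          = Fin.snoc (fun kk : Fin (k + 1) => e (m + (kk : ℕ))) (e (m + (k + 1))) := by
        funext kk
        refine Fin.lastCases ?_ (fun kk => ?_) kk
        · rw [Fin.snoc_last]
          norm_num
        · rw [Fin.snoc_castSucc]
          simp
      rw [hsnoc, probT_snoc, ← ih, ← orbit_eq_orbT]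
      show S.pathProb e m x k * S.p (e (m + k + 1)) (S.orbit e m x k) = _
      congr 3
      omega

lemma probT_nonneg (S : CMS E V K) (n : ℕ) (c : Fin (n + 1) → E) (x : K) :
    0 ≤ S.probT n c x := by
  induction n generalizing x with
  | zero => exact S.p_nonneg _ _
  | succ k ih => exact mul_nonneg (S.p_nonneg _ _) (ih _ _)

lemma i_eq_of_p_ne_zero (S : CMS E V K) {e : E} {v : V} {x : K}
    (hx : x ∈ S.Ks v) (h : S.p e x ≠ 0) : S.i e = v := by
  have hx' : x ∈ S.Ks (S.i e) := by
    by_contra h'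
    exact h (S.p_zero e x h')
  by_contra hne
  exact Set.disjoint_left.mp (S.Ks_disj _ _ hne) hx' hx

lemma p_first_ne_zero (S : CMS E V K) {n : ℕ} {c : Fin (n + 1) → E} {x : K}
    (h : S.probT n c x ≠ 0) : S.p (c 0) x ≠ 0 := by
  intro h0
  cases n with
  | zero => exact h (by rw [probT_zero, h0])
  | succ k => exact h (by rw [probT_succ, h0, zero_mul])

lemma key (S : CMS E V K) : ∀ (n : ℕ) (v : V) (x y : K), x ∈ S.Ks v → y ∈ S.Ks v →
    (∑ c : Fin (n + 1) → E, S.probT n c x * dist (S.orbT n c x) (S.orbT n c y))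
      ≤ S.a ^ (n + 1) * dist x y := by
  intro n
  induction n with
  | zero =>
      intro v x y hx hy
      have h1 : (∑ c : Fin 1 → E, S.probT 0 c x * dist (S.orbT 0 c x) (S.orbT 0 c y))
          = ∑ e : E, S.p e x * dist (S.w e x) (S.w e y) :=
        Fintype.sum_equiv (Equiv.funUnique (Fin 1) E) _ _
          (fun c => by rw [probT_zero, orbT_zero, orbT_zero]; rfl)
      rw [h1, pow_one]
      exact S.contractive v x hx y hy
  | succ n ih =>
      intro v x y hx hy
      have hsum : (∑ c : Fin (n + 2) → E,
            S.probT (n + 1) c x * dist (S.orbT (n + 1) c x) (S.orbT (n + 1) c y))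
          = ∑ e : E, ∑ c : Fin (n + 1) → E,
              S.p e x * (S.probT n c (S.w e x)
                * dist (S.orbT n c (S.w e x)) (S.orbT n c (S.w e y))) := by
        have h2 : (∑ c : Fin (n + 2) → E,
              S.probT (n + 1) c x * dist (S.orbT (n + 1) c x) (S.orbT (n + 1) c y))
            = ∑ p : E × (Fin (n + 1) → E), S.p p.1 x * (S.probT n p.2 (S.w p.1 x)
                * dist (S.orbT n p.2 (S.w p.1 x)) (S.orbT n p.2 (S.w p.1 y))) := by
          refine Fintype.sum_equiv ((Fin.consEquiv fun _ : Fin (n + 2) => E).symm) _ _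
            (fun c => ?_)
          simp only [Fin.consEquiv_symm_apply]
          rw [probT_succ, orbT_succ, orbT_succ]
          ring
        rw [h2, Fintype.sum_prod_type]
      rw [hsum]
      have hb : ∀ e : E, (∑ c : Fin (n + 1) → E,
            S.p e x * (S.probT n c (S.w e x)
              * dist (S.orbT n c (S.w e x)) (S.orbT n c (S.w e y))))
          ≤ S.p e x * (S.a ^ (n + 1) * dist (S.w e x) (S.w e y)) := by
        intro e
        rw [← Finset.mul_sum]
        by_cases hpe : S.p e x = 0
        · simp [hpe]
        · have hie : S.i e = v := S.i_eq_of_p_ne_zero hx hpe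
          have hwx : S.w e x ∈ S.Ks (S.t e) := S.w_maps e (by rw [hie]; exact hx)
          have hwy : S.w e y ∈ S.Ks (S.t e) := S.w_maps e (by rw [hie]; exact hy)
          exact mul_le_mul_of_nonneg_left (ih (S.t e) _ _ hwx hwy) (S.p_nonneg e x)
      calc (∑ e : E, ∑ c : Fin (n + 1) → E,
            S.p e x * (S.probT n c (S.w e x)
              * dist (S.orbT n c (S.w e x)) (S.orbT n c (S.w e y))))
          ≤ ∑ e : E, S.p e x * (S.a ^ (n + 1) * dist (S.w e x) (S.w e y)) :=
            Finset.sum_le_sum fun e _ => hb e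
        _ = S.a ^ (n + 1) * ∑ e : E, S.p e x * dist (S.w e x) (S.w e y) := by
            rw [Finset.mul_sum]
            exact Finset.sum_congr rfl fun e _ => by ring
        _ ≤ S.a ^ (n + 1) * (S.a * dist x y) :=
            mul_le_mul_of_nonneg_left (S.contractive v x hx y hy)
              (pow_nonneg S.ha0.le _)
        _ = S.a ^ (n + 1 + 1) * dist x y := by ring

end CMS

/-- extension of a finite tuple to `ℤ → E`. -/
def extFun {E : Type*} (m : ℤ) (j : ℕ) (c : Fin (j + 1) → E) : ℤ → E :=
  fun k => if h : (k - m).toNat < j + 1 then c ⟨(k - m).toNat, h⟩ else c 0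

lemma extFun_apply {E : Type*} (m : ℤ) (j : ℕ) (c : Fin (j + 1) → E) (k : Fin (j + 1)) :
    extFun m j c (m + (k : ℕ)) = c k := by
  have h1 : (m + (k : ℕ) - m).toNat = (k : ℕ) := by omega
  have h2 : (m + ((k : ℕ) : ℤ) - m).toNat < j + 1 := by rw [h1]; exact k.isLt
  simp only [extFun]
  rw [dif_pos h2]
  exact congrArg c (Fin.ext h1)
/-- `∫ d(Y^x_{m0}, Y^y_{m0}) dP^m_{x_1…x_N} ≤ a^{-m+1} (1/N) ∑_i d(x_i,y_i)`. -/
theorem statement3 {E V K : Type*} [Fintype E] [Fintype V] [MetricSpace K] [CompleteSpace K]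
    [MeasurableSpace K] [BorelSpace K] (S : CMS E V K)
    (P : ∀ m : ℤ, K → @Measure (ℤ → E) (Am E m)) (hP : IsKernel S P)
    (xs ys : V → K) (hxs : ∀ v, xs v ∈ S.Ks v) (hys : ∀ v, ys v ∈ S.Ks v) :
    ∀ m : ℤ, m ≤ 0 →
      ∫⁻ σ, ENNReal.ofReal (dist (S.Y xs m σ) (S.Y ys m σ)) ∂(PmMix P xs m) ≤
        ENNReal.ofReal (S.a ^ (1 - m).toNat *
          ((Fintype.card V : ℝ)⁻¹ * ∑ v, dist (xs v) (ys v))) := by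
  intro m hm
  letI : MeasurableSpace (ℤ → E) := Am E m
  have hj1 : (1 - m).toNat = (-m).toNat + 1 := by omega
  set j : ℕ := (-m).toNat with hjdef
  -- measurability of the finite cylinders
  have hA : ∀ c : Fin (j + 1) → E,
      MeasurableSet[Am E m] {σ : ℤ → E | ∀ k : Fin (j + 1), σ (m + (k : ℕ)) = c k} := by
    intro c
    have hset : {σ : ℤ → E | ∀ k : Fin (j + 1), σ (m + (k : ℕ)) = c k}
        = ⋂ k : Fin (j + 1), (fun σ : ℤ → E => σ (m + ((k : ℕ) : ℤ))) ⁻¹' {c k} := by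
      ext σ
      simp [Set.mem_iInter, Set.mem_preimage]
    rw [hset]
    refine MeasurableSet.iInter fun k => ?_
    have hle : MeasurableSpace.comap (fun σ : ℤ → E => σ (m + ((k : ℕ) : ℤ))) ⊤ ≤ Am E m :=
      le_iSup_of_le (m + ((k : ℕ) : ℤ)) (le_iSup_of_le (by omega) le_rfl)
    exact hle _ ⟨{c k}, MeasurableSpace.measurableSet_top, rfl⟩
  -- measure of the finite cylinders
  have hmu : ∀ (z : K) (c : Fin (j + 1) → E),
      P m z {σ : ℤ → E | ∀ k : Fin (j + 1), σ (m + (k : ℕ)) = c k}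
        = ENNReal.ofReal (S.probT j c z) := by
    intro z c
    have hset : {σ : ℤ → E | ∀ k : Fin (j + 1), σ (m + (k : ℕ)) = c k}
        = cyl m j (extFun m j c) := by
      ext σ
      constructor
      · intro hσ k hk1 hk2
        have hn : (k - m).toNat < j + 1 := by omega
        have hk : k = m + (((k - m).toNat : ℕ) : ℤ) := by omega
        calc σ k = σ (m + (((k - m).toNat : ℕ) : ℤ)) := by rw [← hk]
          _ = c ⟨(k - m).toNat, hn⟩ := hσ ⟨(k - m).toNat, hn⟩
          _ = extFun m j c (m + (((k - m).toNat : ℕ) : ℤ)) :=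
              (extFun_apply m j c ⟨(k - m).toNat, hn⟩).symm
          _ = extFun m j c k := by rw [← hk]
      · intro hσ k
        have h1 : m ≤ m + ((k : ℕ) : ℤ) := by omega
        have h2 : m + ((k : ℕ) : ℤ) ≤ m + (j : ℤ) := by
          have := k.isLt
          omega
        rw [hσ _ h1 h2, extFun_apply]
    rw [hset, hP.2 m z (extFun m j c) j, S.pathProb_eq_probT]
    congr 2
    funext k
    exact extFun_apply m j c k
  set g : (Fin (j + 1) → E) → ℝ≥0∞ := fun c =>
    ENNReal.ofReal (dist (S.orbT j c (xs (S.i (c 0)))) (S.orbT j c (ys (S.i (c 0))))) with hg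
  have hY : ∀ (zs : V → K) (σ : ℤ → E),
      S.Y zs m σ = S.orbT j (fun k : Fin (j + 1) => σ (m + (k : ℕ))) (zs (S.i (σ m))) := by
    intro zs σ
    rw [CMS.Y, ← hjdef, S.orbit_eq_orbT]
  have hm0 : m + (((0 : Fin (j + 1)) : ℕ) : ℤ) = m := by norm_num
  have hpt : ∀ σ : ℤ → E, ENNReal.ofReal (dist (S.Y xs m σ) (S.Y ys m σ))
      = ∑ c : Fin (j + 1) → E,
          Set.indicator {σ' : ℤ → E | ∀ k : Fin (j + 1), σ' (m + (k : ℕ)) = c k}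
            (fun _ => g c) σ := by
    intro σ
    rw [Finset.sum_eq_single (fun k : Fin (j + 1) => σ (m + ((k : ℕ) : ℤ)))]
    · have hmemσ : σ ∈ {σ' : ℤ → E | ∀ k : Fin (j + 1),
          σ' (m + ((k : ℕ) : ℤ)) = (fun k : Fin (j + 1) => σ (m + ((k : ℕ) : ℤ))) k} :=
        fun k => rfl
      rw [Set.indicator_of_mem hmemσ, hg]
      simp only []
      rw [hY xs σ, hY ys σ, hm0]
    · intro c _ hne
      exact Set.indicator_of_notMem (fun hmem => hne (funext fun k => (hmem k).symm)) _
    · intro hmem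
      exact absurd (Finset.mem_univ _) hmem
  have hone : ∀ z : K,
      ∫⁻ σ, ENNReal.ofReal (dist (S.Y xs m σ) (S.Y ys m σ)) ∂(P m z)
        = ∑ c : Fin (j + 1) → E, g c * ENNReal.ofReal (S.probT j c z) := by
    intro z
    rw [lintegral_congr hpt,
      lintegral_finset_sum _ (fun c _ => measurable_const.indicator (hA c))]
    refine Finset.sum_congr rfl fun c _ => ?_
    rw [lintegral_indicator_const (hA c), hmu z c]
  have hvb : ∀ v : V,
      ∫⁻ σ, ENNReal.ofReal (dist (S.Y xs m σ) (S.Y ys m σ)) ∂(P m (xs v))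
        ≤ ENNReal.ofReal (S.a ^ (j + 1) * dist (xs v) (ys v)) := by
    intro v
    rw [hone (xs v)]
    have hterm : ∀ c : Fin (j + 1) → E, g c * ENNReal.ofReal (S.probT j c (xs v))
        = ENNReal.ofReal (S.probT j c (xs v)
            * dist (S.orbT j c (xs v)) (S.orbT j c (ys v))) := by
      intro c
      by_cases h0 : S.probT j c (xs v) = 0
      · simp [h0]
      · have hi0 : S.i (c 0) = v := S.i_eq_of_p_ne_zero (hxs v) (S.p_first_ne_zero h0)
        rw [hg]
        simp only []
        rw [hi0, ← ENNReal.ofReal_mul dist_nonneg]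
        congr 1
        ring
    rw [Finset.sum_congr rfl fun c _ => hterm c,
      ← ENNReal.ofReal_sum_of_nonneg
        (fun c _ => mul_nonneg (S.probT_nonneg j c _) dist_nonneg)]
    exact ENNReal.ofReal_le_ofReal (S.key j v (xs v) (ys v) (hxs v) (hys v))
  simp only [PmMix]
  rw [lintegral_smul_measure, lintegral_finset_sum_measure]
  rcases isEmpty_or_nonempty V with hV | hV
  · rw [Finset.univ_eq_empty, Finset.sum_empty, smul_zero]
    exact zero_le
  · have hcpos : (0 : ℝ) < (Fintype.card V : ℝ) := by
      exact_mod_cast Fintype.card_pos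
    calc ((Fintype.card V : ℝ≥0∞))⁻¹
          * ∑ v : V, ∫⁻ σ, ENNReal.ofReal (dist (S.Y xs m σ) (S.Y ys m σ)) ∂(P m (xs v))
        ≤ ((Fintype.card V : ℝ≥0∞))⁻¹
            * ∑ v : V, ENNReal.ofReal (S.a ^ (j + 1) * dist (xs v) (ys v)) :=
          mul_le_mul_right (Finset.sum_le_sum fun v _ => hvb v) _
      _ = ((Fintype.card V : ℝ≥0∞))⁻¹
            * ENNReal.ofReal (∑ v : V, S.a ^ (j + 1) * dist (xs v) (ys v)) := by
          rw [ENNReal.ofReal_sum_of_nonneg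
            (fun v _ => mul_nonneg (pow_nonneg S.ha0.le _) dist_nonneg)]
      _ = ENNReal.ofReal ((Fintype.card V : ℝ)⁻¹
            * ∑ v : V, S.a ^ (j + 1) * dist (xs v) (ys v)) := by
          rw [ENNReal.ofReal_mul (inv_nonneg.mpr hcpos.le),
            ENNReal.ofReal_inv_of_pos hcpos, ENNReal.ofReal_natCast]
      _ = ENNReal.ofReal (S.a ^ (1 - m).toNat
            * ((Fintype.card V : ℝ)⁻¹ * ∑ v : V, dist (xs v) (ys v))) := by
          rw [hj1]
          congr 1
          rw [← Finset.mul_sum]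
          ring
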